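/- Every separated locally proper map f : Y → S admits a fiberwise one-point compactification: there exist a topological space X, an open embedding j : Y → X, and a proper map p : X → S with f = p ∘ j. Concretely, the underlying set of X may be taken to be Y ⊔ S with the topology described by: open subsets of Y are open; for x = f(y) with N → U a proper restriction of f, the set (f⁻¹(U) − N) ⊔ U is a neighborhood of x; for x ∉ f(Y) and any open neighborhood U of x, the set f⁻¹(U) ⊔ U is a neighborhood of x. -/

import Mathlib

open Set Topology Filter

/-- Locally proper (in the sense of the paper): every point `y` and neighborhood `V` of `y`
admit neighborhoods `U ∋ f y` and `N ⊆ f⁻¹' U ∩ V` of `y` such that the restriction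
`N → U` of `f` is proper, i.e. separated and universally closed. -/
def IsLocallyProper {Y S : Type*} [TopologicalSpace Y] [TopologicalSpace S]
    (f : Y → S) : Prop :=
  ∀ y : Y, ∀ V ∈ 𝓝 y, ∃ N ∈ 𝓝 y, ∃ U ∈ 𝓝 (f y), N ⊆ f ⁻¹' U ∩ V ∧
    ∃ hm : Set.MapsTo f N U,
      IsSeparatedMap (hm.restrict f N U) ∧ IsProperMap (hm.restrict f N U)

section FOPC
variable {Y S : Type*} [TopologicalSpace Y] [TopologicalSpace S]

/-- `f` is proper on `K` over `U`, ultrafilter formulation. -/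
def ProperOn (f : Y → S) (K : Set Y) (U : Set S) : Prop :=
  ∀ ⦃𝒱 : Ultrafilter Y⦄ ⦃x : S⦄, K ∈ 𝒱 → x ∈ U → Tendsto f 𝒱 (𝓝 x) →
    ∃ y ∈ K, f y = x ∧ ↑𝒱 ≤ 𝓝 y

lemma properOn_empty (f : Y → S) (U : Set S) : ProperOn f ∅ U := by
  intro 𝒱 x hK
  exact absurd hK (by simp [Filter.empty_notMem])

lemma ProperOn.shrink {f : Y → S} {K : Set Y} {U U' : Set S} (h : ProperOn f K U)
    (hU : U' ⊆ U) : ProperOn f (K ∩ f ⁻¹' U') U' := by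
  intro 𝒱 x hK hx ht
  obtain ⟨y, hyK, hfy, hle⟩ := h (mem_of_superset hK inter_subset_left) (hU hx) ht
  exact ⟨y, ⟨hyK, by simp [hfy, hx]⟩, hfy, hle⟩

lemma ProperOn.union {f : Y → S} {K₁ K₂ : Set Y} {U : Set S} (h₁ : ProperOn f K₁ U)
    (h₂ : ProperOn f K₂ U) : ProperOn f (K₁ ∪ K₂) U := by
  intro 𝒱 x hK hx ht
  rcases (Ultrafilter.union_mem_iff.1 hK) with h | h
  · obtain ⟨y, hy, h'⟩ := h₁ h hx ht; exact ⟨y, Or.inl hy, h'⟩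
  · obtain ⟨y, hy, h'⟩ := h₂ h hx ht; exact ⟨y, Or.inr hy, h'⟩

lemma ProperOn.of_restrict {f : Y → S} {K : Set Y} {U : Set S} (hm : MapsTo f K U)
    (hp : IsProperMap (hm.restrict f K U)) : ProperOn f K U := by
  intro 𝒱 x hK hx ht
  have hrange : Set.range ((↑) : K → Y) ∈ 𝒱 := by rwa [Subtype.range_coe]
  set 𝒲 : Ultrafilter K := 𝒱.comap Subtype.coe_injective hrange with h𝒲
  have hmapval : (𝒲 : Filter K).map ((↑) : K → Y) = 𝒱 := Filter.map_comap_of_mem hrange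
  have htW : Tendsto (hm.restrict f K U) 𝒲 (𝓝 ⟨x, hx⟩) := by
    rw [IsEmbedding.subtypeVal.tendsto_nhds_iff]
    have : ((↑) : U → S) ∘ hm.restrict f K U = f ∘ ((↑) : K → Y) := rfl
    show Tendsto (((↑) : U → S) ∘ hm.restrict f K U) 𝒲 (𝓝 x)
    rw [this, ← Filter.tendsto_map'_iff, hmapval]
    exact ht
  obtain ⟨z, hz, hzle⟩ := hp.ultrafilter_le_nhds_of_tendsto htW
  refine ⟨z, z.2, ?_, ?_⟩
  · exact congrArg Subtype.val hz
  · rw [← hmapval]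
    calc (𝒲 : Filter K).map ((↑) : K → Y) ≤ (𝓝 z).map _ := map_mono hzle
    _ ≤ 𝓝 (z : Y) := continuous_subtype_val.tendsto z

/-- Relative closedness: if `f` is separated and proper on `K` over open `U`,
then `f⁻¹ U \ K` is open. -/
lemma ProperOn.isOpen_diff {f : Y → S} (hc : Continuous f) (hsep : IsSeparatedMap f)
    {K : Set Y} {U : Set S} (hU : IsOpen U) (h : ProperOn f K U) :
    IsOpen (f ⁻¹' U \ K) := by
  rw [isOpen_iff_mem_nhds]
  rintro y ⟨hyU, hyK⟩
  have hUy : f ⁻¹' U ∈ 𝓝 y := (hU.preimage hc).mem_nhds hyU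
  by_contra hmem
  have hne : NeBot (𝓝 y ⊓ 𝓟 K) := by
    rw [inf_principal_neBot_iff]
    intro V hV
    by_contra hVe
    rw [not_nonempty_iff_eq_empty] at hVe
    exact hmem (mem_of_superset (inter_mem hV hUy) (fun z ⟨hz1, hz2⟩ => ⟨hz2, fun hzK =>
      (eq_empty_iff_forall_notMem.1 hVe z) ⟨hz1, hzK⟩⟩))
  haveI := hne
  obtain ⟨𝒱, h𝒱⟩ := Filter.exists_ultrafilter_le (𝓝 y ⊓ 𝓟 K)
  have hKV : K ∈ 𝒱 := le_principal_iff.1 (h𝒱.trans inf_le_right)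
  have hyV : (𝒱 : Filter Y) ≤ 𝓝 y := h𝒱.trans inf_le_left
  have ht : Tendsto f 𝒱 (𝓝 (f y)) := (hc.tendsto y).mono_left hyV
  obtain ⟨y', hy'K, hfy', hle⟩ := h hKV hyU ht
  rcases eq_or_ne y' y with rfl | hne'
  · exact hyK hy'K
  · rw [isSeparatedMap_iff_disjoint_nhds] at hsep
    have hb : (𝒱 : Filter Y) ≤ ⊥ := (hsep y' y hfy' hne').eq_bot ▸ (le_inf hle hyV)
    exact (𝒱.neBot').ne (le_bot_iff.1 hb)

/-- Generator of the neighborhood filter of `inr x` in the fiberwise one-point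
compactification. -/
def FopcGen (f : Y → S) (x : S) (W : Set (Y ⊕ S)) : Prop :=
  ∃ (U : Set S) (K : Set Y), IsOpen U ∧ x ∈ U ∧ K ⊆ f ⁻¹' U ∧ ProperOn f K U ∧
    W = Sum.inl '' (f ⁻¹' U \ K) ∪ Sum.inr '' U

lemma fopcGen_of_open {f : Y → S} {x : S} {U : Set S} (hU : IsOpen U) (hx : x ∈ U) :
    FopcGen f x (Sum.inl '' (f ⁻¹' U) ∪ Sum.inr '' U) :=
  ⟨U, ∅, hU, hx, empty_subset _, properOn_empty f U, by simp⟩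

/-- The neighborhood filter of `inr x`. -/
def fopcNhdsInr (f : Y → S) (x : S) : Filter (Y ⊕ S) where
  sets := {s | ∃ W, FopcGen f x W ∧ W ⊆ s}
  univ_sets := ⟨_, fopcGen_of_open isOpen_univ (mem_univ x), subset_univ _⟩
  sets_of_superset := by
    rintro s t ⟨W, h, hs⟩ hsub
    exact ⟨W, h, hs.trans hsub⟩
  inter_sets := by
    rintro s t ⟨W₁, ⟨U₁, K₁, hU₁, hx₁, hK₁, hp₁, rfl⟩, hs⟩
      ⟨W₂, ⟨U₂, K₂, hU₂, hx₂, hK₂, hp₂, rfl⟩, ht⟩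
    refine ⟨Sum.inl '' (f ⁻¹' (U₁ ∩ U₂) \ ((K₁ ∪ K₂) ∩ f ⁻¹' (U₁ ∩ U₂))) ∪
        Sum.inr '' (U₁ ∩ U₂),
      ⟨U₁ ∩ U₂, (K₁ ∪ K₂) ∩ f ⁻¹' (U₁ ∩ U₂), hU₁.inter hU₂, ⟨hx₁, hx₂⟩,
        inter_subset_right, ?_, rfl⟩, ?_⟩
    · have h := (hp₁.shrink (U' := U₁ ∩ U₂) inter_subset_left).union
        (hp₂.shrink (U' := U₁ ∩ U₂) inter_subset_right)
      rwa [← union_inter_distrib_right] at h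
    · rintro b (⟨y, ⟨hyU, hyK⟩, rfl⟩ | ⟨z, hz, rfl⟩)
      · have hyK' : y ∉ K₁ ∪ K₂ := fun h => hyK ⟨h, hyU⟩
        exact ⟨hs (Or.inl ⟨y, ⟨hyU.1, fun h => hyK' (Or.inl h)⟩, rfl⟩),
          ht (Or.inl ⟨y, ⟨hyU.2, fun h => hyK' (Or.inr h)⟩, rfl⟩)⟩
      · exact ⟨hs (Or.inr ⟨z, hz.1, rfl⟩), ht (Or.inr ⟨z, hz.2, rfl⟩)⟩

lemma mem_fopcNhdsInr {f : Y → S} {x : S} {s : Set (Y ⊕ S)} :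
    s ∈ fopcNhdsInr f x ↔ ∃ W, FopcGen f x W ∧ W ⊆ s := Iff.rfl

/-- The full neighborhood function. -/
def fopcNhds (f : Y → S) : Y ⊕ S → Filter (Y ⊕ S) :=
  Sum.elim (fun y => Filter.map Sum.inl (𝓝 y)) (fopcNhdsInr f)

lemma preimage_inl_union (A : Set Y) (U : Set S) :
    Sum.inl ⁻¹' (Sum.inl '' A ∪ Sum.inr '' U) = A := by
  ext y; simp

lemma preimage_inr_union (A : Set Y) (U : Set S) :
    Sum.inr ⁻¹' (Sum.inl '' A ∪ Sum.inr '' U) = U := by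
  ext x; simp

lemma fopcNhds_eq (f : Y → S) (hc : Continuous f) (hsep : IsSeparatedMap f) (a : Y ⊕ S) :
    @nhds _ (TopologicalSpace.mkOfNhds (fopcNhds f)) a = fopcNhds f a := by
  apply TopologicalSpace.nhds_mkOfNhds
  · intro b
    cases b with
    | inl y =>
      show pure (Sum.inl y) ≤ Filter.map Sum.inl (𝓝 y)
      rw [← Filter.map_pure]
      exact Filter.map_mono (pure_le_nhds y)
    | inr x =>
      intro s hs
      obtain ⟨W, ⟨U, K, hU, hx, _, _, rfl⟩, hWs⟩ := hs
      exact hWs (Or.inr ⟨x, hx, rfl⟩)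
  · intro b s hs
    cases b with
    | inl y =>
      have hT : ∀ᶠ z in 𝓝 y, z ∈ Sum.inl ⁻¹' s := hs
      show ∀ᶠ b in Filter.map Sum.inl (𝓝 y), s ∈ fopcNhds f b
      rw [Filter.eventually_map]
      exact eventually_eventually_nhds.2 hT
    | inr x =>
      obtain ⟨W, ⟨U, K, hU, hx, hK, hp, rfl⟩, hWs⟩ := hs
      show ∀ᶠ b in fopcNhdsInr f x, s ∈ fopcNhds f b
      refine mem_of_superset
        (show _ ∈ fopcNhdsInr f x from ⟨_, ⟨U, K, hU, hx, hK, hp, rfl⟩, subset_rfl⟩) ?_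
      rintro b (⟨y', hy', rfl⟩ | ⟨x', hx', rfl⟩)
      · show s ∈ Filter.map Sum.inl (𝓝 y')
        have hopen := hp.isOpen_diff hc hsep hU
        exact Filter.mem_map.2 (mem_of_superset (hopen.mem_nhds hy')
          (fun z hz => hWs (Or.inl ⟨z, hz, rfl⟩)))
      · exact ⟨_, ⟨U, K, hU, hx', hK, hp, rfl⟩, hWs⟩

end FOPC

/-- Every separated locally proper map `f : Y → S` admits a fiberwise one-point
compactification: there is a topology on `Y ⊕ S` making `Sum.inl : Y → Y ⊕ S` an open
embedding and `p := Sum.elim f id : Y ⊕ S → S` a proper (separated, universally closed)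
map with `f = p ∘ Sum.inl`; moreover the topology is described by: for `x = f y` and
neighborhoods `U ∋ x`, `N ∋ y` with a proper restriction `N → U`, the set
`(f⁻¹ U \ N) ⊔ U` is a neighborhood of `x`, and for `x ∉ f(Y)` and `U ∋ x` open, the set
`f⁻¹ U ⊔ U` is a neighborhood of `x`. -/


theorem stmt_1 {Y S : Type*} [TopologicalSpace Y] [TopologicalSpace S] (f : Y → S)
    (hc : Continuous f) (hsep : IsSeparatedMap f) (hlp : IsLocallyProper f) :
    ∃ τ : TopologicalSpace (Y ⊕ S),
      IsOpenEmbedding (Sum.inl : Y → Y ⊕ S) ∧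
      IsSeparatedMap (Sum.elim f id : Y ⊕ S → S) ∧
      IsProperMap (Sum.elim f id : Y ⊕ S → S) ∧
      (Sum.elim f id : Y ⊕ S → S) ∘ Sum.inl = f ∧
      (∀ (y : Y) (U : Set S) (N : Set Y), U ∈ 𝓝 (f y) → N ∈ 𝓝 y →
        (∃ hm : Set.MapsTo f N U,
          IsSeparatedMap (hm.restrict f N U) ∧ IsProperMap (hm.restrict f N U)) →
        (Sum.inl '' (f ⁻¹' U \ N) ∪ Sum.inr '' U) ∈ 𝓝 (Sum.inr (f y) : Y ⊕ S)) ∧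
      (∀ x : S, x ∉ Set.range f → ∀ U : Set S, IsOpen U → x ∈ U →
        (Sum.inl '' (f ⁻¹' U) ∪ Sum.inr '' U) ∈ 𝓝 (Sum.inr x : Y ⊕ S)) := by
  classical
  letI τ : TopologicalSpace (Y ⊕ S) := TopologicalSpace.mkOfNhds (fopcNhds f)
  have hnhds : ∀ a : Y ⊕ S, 𝓝 a = fopcNhds f a := fopcNhds_eq f hc hsep
  have hinl : ∀ y : Y, 𝓝 (Sum.inl y : Y ⊕ S) = Filter.map Sum.inl (𝓝 y) :=
    fun y => hnhds (Sum.inl y)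
  have hinr : ∀ x : S, 𝓝 (Sum.inr x : Y ⊕ S) = fopcNhdsInr f x :=
    fun x => hnhds (Sum.inr x)
  -- continuity of p
  have hpc : Continuous (Sum.elim f id : Y ⊕ S → S) := by
    rw [continuous_iff_continuousAt]
    rintro (y | x)
    · rw [ContinuousAt, hinl, Filter.tendsto_map'_iff]
      exact hc.tendsto y
    · rw [ContinuousAt, hinr]
      intro s hs
      rw [Filter.mem_map]
      have hx : x ∈ interior s := mem_interior_iff_mem_nhds.2 hs
      refine ⟨_, fopcGen_of_open isOpen_interior hx, ?_⟩
      rintro b (⟨y', hy', rfl⟩ | ⟨x', hx', rfl⟩)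
      · exact Set.mem_preimage.2 (interior_subset (Set.mem_preimage.1 hy'))
      · exact Set.mem_preimage.2 (interior_subset hx')
  -- disjointness of nhds of inl y and inr (f y)
  have key : ∀ (y : Y) (x : S), f y = x →
      Disjoint (𝓝 (Sum.inl y : Y ⊕ S)) (𝓝 (Sum.inr x : Y ⊕ S)) := by
    intro y x hyx
    obtain ⟨N, hN, U, hU, hsub, hm, hsepr, hpr⟩ := hlp y univ univ_mem
    have hyU' : f y ∈ interior U := mem_interior_iff_mem_nhds.2 hU
    have hxU' : x ∈ interior U := hyx ▸ hyU'
    have hPK : ProperOn f (N ∩ f ⁻¹' interior U) (interior U) :=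
      (ProperOn.of_restrict hm hpr).shrink interior_subset
    rw [hinl, hinr, Filter.disjoint_iff]
    refine ⟨Sum.inl '' (interior N ∩ f ⁻¹' interior U),
      Filter.image_mem_map (((isOpen_interior.inter (isOpen_interior.preimage hc)).mem_nhds
        ⟨mem_interior_iff_mem_nhds.2 hN, hyU'⟩)),
      Sum.inl '' (f ⁻¹' interior U \ (N ∩ f ⁻¹' interior U)) ∪ Sum.inr '' interior U,
      ⟨_, ⟨interior U, N ∩ f ⁻¹' interior U, isOpen_interior, hxU',
        inter_subset_right, hPK, rfl⟩, subset_rfl⟩, ?_⟩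
    rw [disjoint_left]
    rintro b ⟨y₁, hy₁, rfl⟩ (⟨y₂, hy₂, heq⟩ | ⟨x₂, hx₂, heq⟩)
    · cases Sum.inl_injective heq
      exact hy₂.2 ⟨interior_subset hy₁.1, hy₁.2⟩
    · cases heq
  refine ⟨τ, ?_, ?_, ?_, Sum.elim_comp_inl f id, ?_, ?_⟩
  · -- open embedding
    refine IsOpenEmbedding.of_continuous_injective_isOpenMap ?_ Sum.inl_injective ?_
    · rw [continuous_iff_continuousAt]
      intro y
      rw [ContinuousAt, hinl]
      exact Filter.tendsto_map
    · refine IsOpenMap.of_nhds_le fun y => ?_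
      rw [hinl]
  · -- separated
    rw [isSeparatedMap_iff_disjoint_nhds]
    rintro (y₁ | x₁) (y₂ | x₂) hab hne
    · have hf12 : f y₁ = f y₂ := hab
      have hd := isSeparatedMap_iff_disjoint_nhds.1 hsep y₁ y₂ hf12
        (fun h => hne (congrArg Sum.inl h))
      rw [hinl, hinl, Filter.disjoint_iff]
      rw [Filter.disjoint_iff] at hd
      obtain ⟨s, hs, t, ht, hst⟩ := hd
      exact ⟨_, Filter.image_mem_map hs, _, Filter.image_mem_map ht,
        (Set.disjoint_image_iff Sum.inl_injective).2 hst⟩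
    · exact key y₁ x₂ hab
    · exact (key y₂ x₁ hab.symm).symm
    · exact absurd (congrArg Sum.inr (hab : x₁ = x₂)) hne
  · -- proper
    rw [isProperMap_iff_ultrafilter]
    refine ⟨hpc, ?_⟩
    intro 𝒰 x hx
    by_cases hYin : Set.range (Sum.inl : Y → Y ⊕ S) ∈ 𝒰
    · set 𝒱 := 𝒰.comap Sum.inl_injective hYin with h𝒱
      have hmap : Filter.map Sum.inl (𝒱 : Filter Y) = (𝒰 : Filter (Y ⊕ S)) := Filter.map_comap_of_mem hYin
      have htf : Tendsto f (𝒱 : Filter Y) (𝓝 x) := by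
        have h1 : Tendsto (Sum.elim f id ∘ Sum.inl) (𝒱 : Filter Y) (𝓝 x) := by
          rw [← Filter.tendsto_map'_iff, hmap]
          exact hx
        exact h1
      by_cases hex : ∃ (U : Set S) (K : Set Y), IsOpen U ∧ x ∈ U ∧ K ⊆ f ⁻¹' U ∧
          ProperOn f K U ∧ K ∈ 𝒱
      · obtain ⟨U, K, hU, hxU, hKU, hp, hKV⟩ := hex
        obtain ⟨y, hyK, hfy, hle⟩ := hp hKV hxU htf
        refine ⟨Sum.inl y, hfy, ?_⟩
        rw [hinl, ← hmap]
        exact Filter.map_mono hle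
      · refine ⟨Sum.inr x, rfl, ?_⟩
        rw [hinr]
        rintro s ⟨W, ⟨U, K, hU, hxU, hKU, hp, rfl⟩, hWs⟩
        have hKn : K ∉ 𝒱 := fun h => hex ⟨U, K, hU, hxU, hKU, hp, h⟩
        have hKc : Kᶜ ∈ 𝒱 := (Ultrafilter.compl_mem_iff_notMem).2 hKn
        have hfU : f ⁻¹' U ∈ 𝒱 := htf (hU.mem_nhds hxU)
        have hdm : f ⁻¹' U \ K ∈ 𝒱 := inter_mem hfU hKc
        refine mem_of_superset ?_ hWs
        rw [← hmap, Filter.mem_map]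
        refine mem_of_superset hdm ?_
        intro z hz
        exact Or.inl ⟨z, hz, rfl⟩
    · have hrin : Set.range (Sum.inr : S → Y ⊕ S) ∈ 𝒰 := by
        refine mem_of_superset ((Ultrafilter.compl_mem_iff_notMem).2 hYin) ?_
        rintro (y | z) h
        · exact absurd ⟨y, rfl⟩ h
        · exact ⟨z, rfl⟩
      refine ⟨Sum.inr x, rfl, ?_⟩
      rw [hinr]
      rintro s ⟨W, ⟨U, K, hU, hxU, hKU, hp, rfl⟩, hWs⟩
      have hpU : (Sum.elim f id : Y ⊕ S → S) ⁻¹' U ∈ 𝒰 := hx (hU.mem_nhds hxU)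
      refine mem_of_superset (inter_mem hpU hrin) ?_
      rintro b ⟨hb, z, rfl⟩
      exact hWs (Or.inr ⟨z, hb, rfl⟩)
  · -- neighborhoods at points of the image
    rintro y U N hU hN ⟨hm, _, hpr⟩
    rw [hinr]
    have hP : ProperOn f (N ∩ f ⁻¹' interior U) (interior U) :=
      (ProperOn.of_restrict hm hpr).shrink interior_subset
    refine ⟨_, ⟨interior U, N ∩ f ⁻¹' interior U, isOpen_interior,
      mem_interior_iff_mem_nhds.2 hU, inter_subset_right, hP, rfl⟩, ?_⟩
    rintro b (⟨y', ⟨hy'U, hy'K⟩, rfl⟩ | ⟨x', hx', rfl⟩)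
    · exact Or.inl ⟨y', ⟨Set.mem_preimage.2 (interior_subset hy'U), fun h => hy'K ⟨h, hy'U⟩⟩, rfl⟩
    · exact Or.inr ⟨x', interior_subset hx', rfl⟩
  · -- neighborhoods at points outside the image
    intro x hx U hU hxU
    rw [hinr]
    exact ⟨_, fopcGen_of_open hU hxU, subset_rfl⟩
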